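/- arXiv:2305.06281 — 2 statements merged into one kernel-verified Lean document; each statement's English description precedes it below -/
import Mathlib

section
/- Let p > 0 and W(x) = |x|^p, and let g_a(y) = (a/π)^{1/4}·e^{−a y²/2}. Then there exist constants C > 0 and γ₀ > 0 such that for all a ≥ 1 and all x ∈ ℝ, |(W ∗ g_a²)(x) − W(x)| ≤ C·a^{−γ₀/2}·(1 + |x|^p). -/
open MeasureTheory Real

/-- The `L²`-normalised gaussian `g_a(y) = (a/π)^{1/4} e^{-a y²/2}`. -/
noncomputable def gauss (a y : ℝ) : ℝ := (a / π) ^ ((1 : ℝ) / 4) * Real.exp (-a * y ^ 2 / 2)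

lemma aux_sup {q c t : ℝ} (hq : 0 ≤ q) (hc : 0 < c) (ht : 0 ≤ t) :
    t ^ q * Real.exp (-c * t ^ 2) ≤ (q / (2 * c)) ^ (q / 2) := by
  rcases hq.eq_or_lt with rfl | hq
  · simp only [Real.rpow_zero, one_mul, zero_div]
    exact Real.exp_le_one_iff.mpr (by nlinarith)
  rcases ht.eq_or_lt with rfl | ht
  · rw [Real.zero_rpow hq.ne', zero_mul]
    positivity
  have hqc : 0 < q / (2 * c) := by positivity
  rw [← Real.exp_log (show (0:ℝ) < t ^ q * Real.exp (-c * t ^ 2) by positivity),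
      ← Real.exp_log (Real.rpow_pos_of_pos hqc _)]
  apply Real.exp_le_exp.mpr
  rw [Real.log_mul (by positivity) (Real.exp_ne_zero _), Real.log_rpow ht,
      Real.log_rpow hqc, Real.log_exp]
  have h1 : Real.log (2 * c * t ^ 2 / q) ≤ 2 * c * t ^ 2 / q - 1 :=
    Real.log_le_sub_one_of_pos (by positivity)
  have h2 : Real.log (2 * c * t ^ 2 / q) = Real.log (2 * c) + 2 * Real.log t - Real.log q := by
    rw [Real.log_div (by positivity) hq.ne', Real.log_mul (by positivity) (by positivity),
        Real.log_pow]
    push_cast; ring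
  have h3 : Real.log (q / (2 * c)) = Real.log q - Real.log (2 * c) :=
    Real.log_div hq.ne' (by positivity)
  rw [h3]
  have h5 := mul_le_mul_of_nonneg_left h1 (le_of_lt (half_pos hq))
  rw [h2] at h5
  have h6 : q / 2 * (2 * c * t ^ 2 / q - 1) = c * t ^ 2 - q / 2 := by
    field_simp
  rw [h6] at h5
  nlinarith

lemma gauss_sq {a : ℝ} (ha : 0 < a) (y : ℝ) :
    gauss a y ^ 2 = Real.sqrt (a / π) * Real.exp (-a * y ^ 2) := by
  have hπ : 0 < a / π := div_pos ha Real.pi_pos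
  have h1 : ((a/π) ^ ((1:ℝ)/4)) ^ 2 = (a/π) ^ ((1:ℝ)/2) := by
    rw [← Real.rpow_natCast ((a/π) ^ ((1:ℝ)/4)) 2, ← Real.rpow_mul hπ.le]
    norm_num
  have h2 : Real.exp (-a * y ^ 2 / 2) ^ 2 = Real.exp (-a * y ^ 2) := by
    rw [sq, ← Real.exp_add]; ring_nf
  rw [gauss, mul_pow, h1, h2, Real.sqrt_eq_rpow]

lemma aux_ptwise {a q : ℝ} (ha : 0 < a) (hq : 0 ≤ q) (y : ℝ) :
    |y| ^ q * Real.exp (-a * y ^ 2) ≤ (q / a) ^ (q / 2) * Real.exp (-(a / 2) * y ^ 2) := by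
  have h := aux_sup hq (half_pos ha) (abs_nonneg y)
  rw [sq_abs, show (2 * (a/2)) = a by ring] at h
  have he : Real.exp (-a * y ^ 2) = Real.exp (-(a/2) * y ^ 2) * Real.exp (-(a/2) * y ^ 2) := by
    rw [← Real.exp_add]; ring_nf
  calc |y| ^ q * Real.exp (-a * y ^ 2)
      = (|y| ^ q * Real.exp (-(a/2) * y ^ 2)) * Real.exp (-(a/2) * y ^ 2) := by rw [he]; ring
    _ ≤ (q / a) ^ (q / 2) * Real.exp (-(a / 2) * y ^ 2) :=
        mul_le_mul_of_nonneg_right h (Real.exp_nonneg _)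

lemma integrable_aux {a q : ℝ} (ha : 0 < a) (hq : 0 ≤ q) :
    Integrable (fun y : ℝ => |y| ^ q * Real.exp (-a * y ^ 2)) := by
  apply Integrable.mono ((integrable_exp_neg_mul_sq (half_pos ha)).const_mul ((q / a) ^ (q / 2)))
  · exact (Continuous.mul (continuous_abs.rpow_const fun y => Or.inr hq)
      (Real.continuous_exp.comp (by continuity))).aestronglyMeasurable
  · filter_upwards with y
    rw [Real.norm_eq_abs, Real.norm_eq_abs,
        abs_of_nonneg (show (0:ℝ) ≤ |y| ^ q * Real.exp (-a * y ^ 2) by positivity),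
        abs_of_nonneg (show (0:ℝ) ≤ (q / a) ^ (q / 2) * Real.exp (-(a/2) * y ^ 2) by positivity)]
    exact aux_ptwise ha hq y

lemma integrable_gauss_moment {a q : ℝ} (ha : 0 < a) (hq : 0 ≤ q) :
    Integrable (fun y : ℝ => |y| ^ q * gauss a y ^ 2) := by
  have : (fun y : ℝ => |y| ^ q * gauss a y ^ 2)
      = fun y => Real.sqrt (a / π) * (|y| ^ q * Real.exp (-a * y ^ 2)) := by
    funext y; rw [gauss_sq ha]; ring
  rw [this]
  exact (integrable_aux ha hq).const_mul _

lemma integrable_gauss_sq {a : ℝ} (ha : 0 < a) : Integrable (fun y : ℝ => gauss a y ^ 2) := by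
  have h := integrable_gauss_moment ha le_rfl (q := 0)
  simpa using h

lemma gauss_total {a : ℝ} (ha : 0 < a) : ∫ y : ℝ, gauss a y ^ 2 = 1 := by
  simp_rw [gauss_sq ha]
  rw [integral_const_mul, integral_gaussian, ← Real.sqrt_mul (by positivity)]
  rw [show a / π * (π / a) = 1 by field_simp]
  exact Real.sqrt_one

lemma moment_bound {a q : ℝ} (ha : 0 < a) (hq : 0 ≤ q) :
    ∫ y : ℝ, |y| ^ q * gauss a y ^ 2 ≤ Real.sqrt 2 * (q / a) ^ (q / 2) := by
  have key : ∫ y : ℝ, |y| ^ q * gauss a y ^ 2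
      ≤ ∫ y : ℝ, Real.sqrt (a / π) * ((q / a) ^ (q / 2) * Real.exp (-(a / 2) * y ^ 2)) := by
    apply integral_mono (integrable_gauss_moment ha hq)
      (((integrable_exp_neg_mul_sq (half_pos ha)).const_mul _).const_mul _)
    intro y
    dsimp only
    rw [gauss_sq ha, show |y| ^ q * (Real.sqrt (a/π) * Real.exp (-a * y ^ 2))
        = Real.sqrt (a/π) * (|y| ^ q * Real.exp (-a * y ^ 2)) by ring]
    exact mul_le_mul_of_nonneg_left (aux_ptwise ha hq y) (Real.sqrt_nonneg _)
  refine key.trans (le_of_eq ?_)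
  rw [integral_const_mul, integral_const_mul, integral_gaussian,
      show π / (a / 2) = 2 * (π / a) by ring, Real.sqrt_mul (by norm_num : (0:ℝ) ≤ 2)]
  have h1 : Real.sqrt (a / π) * Real.sqrt (π / a) = 1 := by
    rw [← Real.sqrt_mul (by positivity), show a / π * (π / a) = 1 by field_simp, Real.sqrt_one]
  linear_combination (Real.sqrt 2 * (q / a) ^ (q / 2)) * h1

lemma real_rpow_add_le {u v p : ℝ} (hu : 0 ≤ u) (hv : 0 ≤ v) (hp : 0 ≤ p) (hp1 : p ≤ 1) :
    (u + v) ^ p ≤ u ^ p + v ^ p := by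
  have h := NNReal.rpow_add_le_add_rpow u.toNNReal v.toNNReal hp hp1
  have h2 := NNReal.coe_le_coe.mpr h
  push_cast at h2
  rwa [Real.coe_toNNReal u hu, Real.coe_toNNReal v hv] at h2

lemma abs_rpow_sub_rpow_le_small {p u v : ℝ} (hp : 0 < p) (hp1 : p ≤ 1)
    (hu : 0 ≤ u) (hv : 0 ≤ v) : |u ^ p - v ^ p| ≤ |u - v| ^ p := by
  have key : ∀ w z : ℝ, 0 ≤ w → 0 ≤ z → w ^ p - z ^ p ≤ |w - z| ^ p := by
    intro w z hw hz
    have hle : w ≤ z + |w - z| := by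
      rcases abs_cases (w - z) with ⟨h, _⟩ | ⟨h, _⟩ <;> linarith
    have := (Real.rpow_le_rpow hw hle hp.le).trans
      (real_rpow_add_le hz (abs_nonneg _) hp.le hp1)
    linarith
  rw [abs_sub_le_iff]
  exact ⟨key u v hu hv, by simpa [abs_sub_comm] using key v u hv hu⟩

lemma rpow_sub_rpow_le_big {p u v : ℝ} (hp : 1 ≤ p) (hv : 0 ≤ v) (huv : v ≤ u) :
    u ^ p - v ^ p ≤ p * u ^ (p - 1) * (u - v) := by
  rcases eq_or_lt_of_le huv with rfl | h
  · norm_num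
  have hcont : ContinuousOn (fun t : ℝ => t ^ p) (Set.Icc v u) := by
    intro t _
    exact ((Real.hasDerivAt_rpow_const (p := p) (Or.inr hp)).continuousAt).continuousWithinAt
  obtain ⟨c, hc, hc'⟩ := exists_hasDerivAt_eq_slope (fun t : ℝ => t ^ p)
    (fun t => p * t ^ (p - 1)) h hcont
    (fun t _ => Real.hasDerivAt_rpow_const (Or.inr hp))
  have hc0 : 0 ≤ c := le_trans hv hc.1.le
  have hcu : c ≤ u := hc.2.le
  rw [eq_div_iff (sub_ne_zero.mpr (ne_of_gt h))] at hc'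
  rw [← hc']
  have hle : c ^ (p - 1) ≤ u ^ (p - 1) := Real.rpow_le_rpow hc0 hcu (by linarith)
  exact mul_le_mul_of_nonneg_right
    (mul_le_mul_of_nonneg_left hle (by linarith)) (by linarith)

lemma rpow_add_split {u v s : ℝ} (hu : 0 ≤ u) (hv : 0 ≤ v) (hs : 0 ≤ s) :
    (u + v) ^ s ≤ 2 ^ s * (u ^ s + v ^ s) := by
  have h2 : (0:ℝ) < 2 ^ s := Real.rpow_pos_of_pos (by norm_num) s
  rcases le_total u v with h | h
  · calc (u + v) ^ s ≤ (2 * v) ^ s := Real.rpow_le_rpow (by linarith) (by linarith) hs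
      _ = 2 ^ s * v ^ s := Real.mul_rpow (by norm_num) hv
      _ ≤ 2 ^ s * (u ^ s + v ^ s) := by nlinarith [Real.rpow_nonneg hu s]
  · calc (u + v) ^ s ≤ (2 * u) ^ s := Real.rpow_le_rpow (by linarith) (by linarith) hs
      _ = 2 ^ s * u ^ s := Real.mul_rpow (by norm_num) hu
      _ ≤ 2 ^ s * (u ^ s + v ^ s) := by nlinarith [Real.rpow_nonneg hv s]

lemma abs_rpow_sub_rpow_le_big {p u v : ℝ} (hp : 1 ≤ p) (hu : 0 ≤ u) (hv : 0 ≤ v) :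
    |u ^ p - v ^ p| ≤ p * (u + v) ^ (p - 1) * |u - v| := by
  have key : ∀ w z : ℝ, 0 ≤ w → 0 ≤ z → z ≤ w →
      w ^ p - z ^ p ≤ p * (w + z) ^ (p - 1) * |w - z| := by
    intro w z hw hz hzw
    have h1 := rpow_sub_rpow_le_big hp hz hzw
    have h2 : w ^ (p-1) ≤ (w + z) ^ (p-1) :=
      Real.rpow_le_rpow hw (by linarith) (by linarith)
    have h3 : |w - z| = w - z := abs_of_nonneg (by linarith)
    rw [h3]
    have h4 := mul_le_mul_of_nonneg_right
      (mul_le_mul_of_nonneg_left h2 (by linarith : (0:ℝ) ≤ p)) (by linarith : (0:ℝ) ≤ w - z)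
    linarith
  rcases le_total v u with h | h
  · rw [abs_of_nonneg (sub_nonneg.mpr (Real.rpow_le_rpow hv h (by linarith)))]
    exact key u v hu hv h
  · rw [abs_of_nonpos (sub_nonpos.mpr (Real.rpow_le_rpow hu h (by linarith))), neg_sub]
    calc v ^ p - u ^ p ≤ p * (v + u) ^ (p-1) * |v - u| := key v u hv hu h
      _ = p * (u + v) ^ (p-1) * |u - v| := by rw [abs_sub_comm, add_comm]

lemma abs_rpow_le_one_add {p x : ℝ} (hp : 1 ≤ p) : |x| ^ (p - 1) ≤ 1 + |x| ^ p := by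
  rcases le_total |x| 1 with h | h
  · have := Real.rpow_le_one (abs_nonneg x) h (by linarith : (0:ℝ) ≤ p - 1)
    nlinarith [Real.rpow_nonneg (abs_nonneg x) p]
  · have := Real.rpow_le_rpow_of_exponent_le h (by linarith : p - 1 ≤ p)
    linarith

lemma integrable_shift {a p : ℝ} (ha : 0 < a) (hp : 0 ≤ p) (x : ℝ) :
    Integrable (fun y : ℝ => |x - y| ^ p * gauss a y ^ 2) := by
  have hmaj : Integrable (fun y : ℝ =>
      2 ^ p * |x| ^ p * gauss a y ^ 2 + 2 ^ p * (|y| ^ p * gauss a y ^ 2)) :=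
    ((integrable_gauss_sq ha).const_mul _).add ((integrable_gauss_moment ha hp).const_mul _)
  apply Integrable.mono hmaj
  · apply Continuous.aestronglyMeasurable
    apply Continuous.mul
    · exact ((continuous_const.sub continuous_id).abs).rpow_const fun y => Or.inr hp
    · exact (Continuous.mul continuous_const
        (Real.continuous_exp.comp (by continuity))).pow 2
  · filter_upwards with y
    rw [Real.norm_eq_abs, Real.norm_eq_abs,
        abs_of_nonneg (show (0:ℝ) ≤ |x - y| ^ p * gauss a y ^ 2 by positivity)]
    have h1 : |x - y| ≤ |x| + |y| := by
      calc |x - y| = |x + -y| := by rw [sub_eq_add_neg]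
        _ ≤ |x| + |-y| := abs_add_le _ _
        _ = |x| + |y| := by rw [abs_neg]
    have h2 : |x - y| ^ p ≤ 2 ^ p * (|x| ^ p + |y| ^ p) :=
      (Real.rpow_le_rpow (abs_nonneg _) h1 hp).trans
        (rpow_add_split (abs_nonneg x) (abs_nonneg y) hp)
    have h3 : |x - y| ^ p * gauss a y ^ 2 ≤ (2 ^ p * (|x| ^ p + |y| ^ p)) * gauss a y ^ 2 :=
      mul_le_mul_of_nonneg_right h2 (sq_nonneg _)
    rw [abs_of_nonneg (show (0:ℝ) ≤ 2 ^ p * |x| ^ p * gauss a y ^ 2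
        + 2 ^ p * (|y| ^ p * gauss a y ^ 2) by positivity)]
    exact h3.trans (le_of_eq (by ring))

/-- For `W(x) = |x|^p` there are `C, γ₀ > 0` with
`|(W ∗ g_a²)(x) - W(x)| ≤ C a^{-γ₀/2} (1 + |x|^p)` for all `a ≥ 1`, `x ∈ ℝ`. -/
theorem power_potential_convolution_error (p : ℝ) (hp : 0 < p) :
    ∃ C γ₀ : ℝ, 0 < C ∧ 0 < γ₀ ∧ ∀ a : ℝ, 1 ≤ a → ∀ x : ℝ,
      |(∫ y : ℝ, |x - y| ^ p * gauss a y ^ 2) - |x| ^ p|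
        ≤ C * a ^ (-(γ₀ / 2)) * (1 + |x| ^ p) := by
  rcases le_or_gt p 1 with hp1 | hp1
  · refine ⟨Real.sqrt 2 * p ^ (p / 2), p, by positivity, hp, fun a ha x => ?_⟩
    have ha0 : (0:ℝ) < a := lt_of_lt_of_le one_pos ha
    have hW := integrable_shift ha0 hp.le x
    have hconst : Integrable (fun y : ℝ => |x| ^ p * gauss a y ^ 2) :=
      (integrable_gauss_sq ha0).const_mul _
    have h0 : (∫ y : ℝ, |x - y| ^ p * gauss a y ^ 2) - |x| ^ p
        = ∫ y : ℝ, (|x - y| ^ p - |x| ^ p) * gauss a y ^ 2 := by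
      rw [show (∫ y : ℝ, (|x - y| ^ p - |x| ^ p) * gauss a y ^ 2)
          = ∫ y : ℝ, (|x - y| ^ p * gauss a y ^ 2 - |x| ^ p * gauss a y ^ 2) from by
            simp_rw [sub_mul],
        integral_sub hW hconst, integral_const_mul, gauss_total ha0, mul_one]
    have habs : Integrable (fun y : ℝ => |(|x - y| ^ p - |x| ^ p) * gauss a y ^ 2|) :=
      (hW.sub hconst).abs.congr (ae_of_all _ fun y => by simp only [Pi.sub_apply]; exact congrArg abs (by ring))
    calc |(∫ y : ℝ, |x - y| ^ p * gauss a y ^ 2) - |x| ^ p|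
        = |∫ y : ℝ, (|x - y| ^ p - |x| ^ p) * gauss a y ^ 2| := by rw [h0]
      _ ≤ ∫ y : ℝ, |(|x - y| ^ p - |x| ^ p) * gauss a y ^ 2| := by
          simpa only [Real.norm_eq_abs] using norm_integral_le_integral_norm (μ := volume)
            (fun y : ℝ => (|x - y| ^ p - |x| ^ p) * gauss a y ^ 2)
      _ ≤ ∫ y : ℝ, |y| ^ p * gauss a y ^ 2 := by
          refine integral_mono habs (integrable_gauss_moment ha0 hp.le) fun y => ?_
          rw [abs_mul, abs_of_nonneg (sq_nonneg (gauss a y))]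
          refine mul_le_mul_of_nonneg_right ?_ (sq_nonneg _)
          calc |(|x - y| ^ p - |x| ^ p)|
              ≤ |(|x - y| - |x|)| ^ p :=
                abs_rpow_sub_rpow_le_small hp hp1 (abs_nonneg _) (abs_nonneg _)
            _ ≤ |y| ^ p := Real.rpow_le_rpow (abs_nonneg _)
                (by simpa using abs_abs_sub_abs_le_abs_sub (x - y) x) hp.le
      _ ≤ Real.sqrt 2 * (p / a) ^ (p / 2) := moment_bound ha0 hp.le
      _ ≤ Real.sqrt 2 * p ^ (p / 2) * a ^ (-(p / 2)) * (1 + |x| ^ p) := by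
          rw [Real.div_rpow hp.le ha0.le, Real.rpow_neg ha0.le, div_eq_mul_inv]
          have h1 : (0:ℝ) < a ^ (p/2) := Real.rpow_pos_of_pos ha0 _
          have h2 : (0:ℝ) ≤ |x| ^ p := Real.rpow_nonneg (abs_nonneg x) p
          have h3 : (0:ℝ) ≤ p ^ (p/2) := Real.rpow_nonneg hp.le _
          nlinarith [Real.sqrt_nonneg 2,
            mul_nonneg (mul_nonneg (Real.sqrt_nonneg 2) h3) (inv_nonneg.mpr h1.le)]
  · set K : ℝ := p * 4 ^ (p - 1) with hKdef
    have hK : 0 < K := by positivity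
    refine ⟨K * Real.sqrt 2 * (1 + p ^ (p / 2)), 1, by positivity, one_pos, fun a ha x => ?_⟩
    have ha0 : (0:ℝ) < a := lt_of_lt_of_le one_pos ha
    have hW := integrable_shift ha0 hp.le x
    have hconst : Integrable (fun y : ℝ => |x| ^ p * gauss a y ^ 2) :=
      (integrable_gauss_sq ha0).const_mul _
    have h0 : (∫ y : ℝ, |x - y| ^ p * gauss a y ^ 2) - |x| ^ p
        = ∫ y : ℝ, (|x - y| ^ p - |x| ^ p) * gauss a y ^ 2 := by
      rw [show (∫ y : ℝ, (|x - y| ^ p - |x| ^ p) * gauss a y ^ 2)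
          = ∫ y : ℝ, (|x - y| ^ p * gauss a y ^ 2 - |x| ^ p * gauss a y ^ 2) from by
            simp_rw [sub_mul],
        integral_sub hW hconst, integral_const_mul, gauss_total ha0, mul_one]
    have habs : Integrable (fun y : ℝ => |(|x - y| ^ p - |x| ^ p) * gauss a y ^ 2|) :=
      (hW.sub hconst).abs.congr (ae_of_all _ fun y => by simp only [Pi.sub_apply]; exact congrArg abs (by ring))
    have hpt : ∀ y : ℝ, |(|x - y| ^ p - |x| ^ p)|
        ≤ K * |x| ^ (p - 1) * |y| ^ (1:ℝ) + K * |y| ^ p := by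
      intro y
      have h1 := abs_rpow_sub_rpow_le_big hp1.le (abs_nonneg (x - y)) (abs_nonneg x)
      have h2 : |(|x - y| - |x|)| ≤ |y| := by
        simpa using abs_abs_sub_abs_le_abs_sub (x - y) x
      have h3 : |x - y| + |x| ≤ 2 * (|x| + |y|) := by
        have : |x - y| ≤ |x| + |y| := by
          calc |x - y| = |x + -y| := by rw [sub_eq_add_neg]
            _ ≤ |x| + |-y| := abs_add_le _ _
            _ = |x| + |y| := by rw [abs_neg]
        linarith [abs_nonneg x, abs_nonneg y]
      have h4 : (|x - y| + |x|) ^ (p-1) ≤ 4 ^ (p-1) * (|x| ^ (p-1) + |y| ^ (p-1)) := by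
        calc (|x - y| + |x|) ^ (p-1) ≤ (2 * (|x| + |y|)) ^ (p-1) :=
              Real.rpow_le_rpow (by positivity) h3 (by linarith)
          _ = 2 ^ (p-1) * (|x| + |y|) ^ (p-1) := Real.mul_rpow (by norm_num) (by positivity)
          _ ≤ 2 ^ (p-1) * (2 ^ (p-1) * (|x| ^ (p-1) + |y| ^ (p-1))) :=
              mul_le_mul_of_nonneg_left
                (rpow_add_split (abs_nonneg x) (abs_nonneg y) (by linarith))
                (Real.rpow_nonneg (by norm_num) _)
          _ = 4 ^ (p-1) * (|x| ^ (p-1) + |y| ^ (p-1)) := by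
              rw [← mul_assoc, ← Real.mul_rpow (by norm_num) (by norm_num)]; norm_num
      have h5 : |y| ^ (p-1) * |y| = |y| ^ p := by
        rcases eq_or_ne y 0 with rfl | hy
        · rw [abs_zero, mul_zero, Real.zero_rpow hp.ne']
        · rw [← Real.rpow_add_one (abs_ne_zero.mpr hy), sub_add_cancel]
      calc |(|x - y| ^ p - |x| ^ p)|
          ≤ p * (|x - y| + |x|) ^ (p-1) * |(|x - y| - |x|)| := h1
        _ ≤ p * (4 ^ (p-1) * (|x| ^ (p-1) + |y| ^ (p-1))) * |y| :=
            mul_le_mul (mul_le_mul_of_nonneg_left h4 hp.le) h2 (abs_nonneg _) (by positivity)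
        _ = K * |x| ^ (p-1) * |y| + K * (|y| ^ (p-1) * |y|) := by rw [hKdef]; ring
        _ = K * |x| ^ (p-1) * |y| ^ (1:ℝ) + K * |y| ^ p := by rw [h5, Real.rpow_one]
    have hmajint : Integrable (fun y : ℝ =>
        K * |x| ^ (p - 1) * (|y| ^ (1:ℝ) * gauss a y ^ 2) + K * (|y| ^ p * gauss a y ^ 2)) :=
      ((integrable_gauss_moment ha0 zero_le_one).const_mul _).add
        ((integrable_gauss_moment ha0 hp.le).const_mul _)
    have hm1 := moment_bound ha0 (zero_le_one) (a := a) (q := 1)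
    have hmp := moment_bound ha0 hp.le (a := a) (q := p)
    have hint1 : (0:ℝ) ≤ ∫ y : ℝ, |y| ^ (1:ℝ) * gauss a y ^ 2 :=
      integral_nonneg fun y => by positivity
    have hintp : (0:ℝ) ≤ ∫ y : ℝ, |y| ^ p * gauss a y ^ 2 :=
      integral_nonneg fun y => by positivity
    calc |(∫ y : ℝ, |x - y| ^ p * gauss a y ^ 2) - |x| ^ p|
        = |∫ y : ℝ, (|x - y| ^ p - |x| ^ p) * gauss a y ^ 2| := by rw [h0]
      _ ≤ ∫ y : ℝ, |(|x - y| ^ p - |x| ^ p) * gauss a y ^ 2| := by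
          simpa only [Real.norm_eq_abs] using norm_integral_le_integral_norm (μ := volume)
            (fun y : ℝ => (|x - y| ^ p - |x| ^ p) * gauss a y ^ 2)
      _ ≤ ∫ y : ℝ, (K * |x| ^ (p - 1) * (|y| ^ (1:ℝ) * gauss a y ^ 2)
            + K * (|y| ^ p * gauss a y ^ 2)) := by
          refine integral_mono habs hmajint fun y => ?_
          rw [abs_mul, abs_of_nonneg (sq_nonneg (gauss a y))]
          calc |(|x - y| ^ p - |x| ^ p)| * gauss a y ^ 2
              ≤ (K * |x| ^ (p - 1) * |y| ^ (1:ℝ) + K * |y| ^ p) * gauss a y ^ 2 :=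
                mul_le_mul_of_nonneg_right (hpt y) (sq_nonneg _)
            _ = K * |x| ^ (p - 1) * (|y| ^ (1:ℝ) * gauss a y ^ 2)
                + K * (|y| ^ p * gauss a y ^ 2) := by ring
      _ = K * |x| ^ (p - 1) * (∫ y : ℝ, |y| ^ (1:ℝ) * gauss a y ^ 2)
            + K * (∫ y : ℝ, |y| ^ p * gauss a y ^ 2) := by
          rw [integral_add ((integrable_gauss_moment ha0 zero_le_one).const_mul _)
            ((integrable_gauss_moment ha0 hp.le).const_mul _),
            integral_const_mul, integral_const_mul]
      _ ≤ K * |x| ^ (p - 1) * (Real.sqrt 2 * ((1:ℝ) / a) ^ ((1:ℝ) / 2))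
            + K * (Real.sqrt 2 * (p / a) ^ (p / 2)) :=
          add_le_add (mul_le_mul_of_nonneg_left hm1 (by positivity))
            (mul_le_mul_of_nonneg_left hmp hK.le)
      _ ≤ K * Real.sqrt 2 * (1 + p ^ (p / 2)) * a ^ (-((1:ℝ) / 2)) * (1 + |x| ^ p) := by
          have e1 : ((1:ℝ) / a) ^ ((1:ℝ) / 2) = a ^ (-((1:ℝ)/2)) := by
            rw [one_div, Real.inv_rpow ha0.le, ← Real.rpow_neg ha0.le]
          have e2 : (p / a) ^ (p / 2) = p ^ (p/2) * a ^ (-(p/2)) := by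
            rw [Real.div_rpow hp.le ha0.le, Real.rpow_neg ha0.le, div_eq_mul_inv]
          have e3 : a ^ (-(p/2)) ≤ a ^ (-((1:ℝ)/2)) :=
            Real.rpow_le_rpow_of_exponent_le ha (by linarith)
          have hA : (0:ℝ) < a ^ (-((1:ℝ)/2)) := Real.rpow_pos_of_pos ha0 _
          have hxp : (0:ℝ) ≤ |x| ^ p := Real.rpow_nonneg (abs_nonneg x) p
          have hq : (0:ℝ) ≤ p ^ (p/2) := Real.rpow_nonneg hp.le _
          have hx1 : |x| ^ (p-1) ≤ 1 + |x| ^ p := abs_rpow_le_one_add hp1.le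
          have hxn : (0:ℝ) ≤ |x| ^ (p-1) := Real.rpow_nonneg (abs_nonneg x) _
          rw [e1, e2]
          have step : |x| ^ (p-1) + p ^ (p/2) ≤ (1 + p ^ (p/2)) * (1 + |x| ^ p) := by
            nlinarith
          have hKs : (0:ℝ) ≤ K * Real.sqrt 2 * a ^ (-((1:ℝ)/2)) := by positivity
          have := mul_le_mul_of_nonneg_left step hKs
          have e4 : p ^ (p/2) * a ^ (-(p/2)) ≤ p ^ (p/2) * a ^ (-((1:ℝ)/2)) :=
            mul_le_mul_of_nonneg_left e3 hq
          nlinarith [mul_le_mul_of_nonneg_left e4 (mul_nonneg hK.le (Real.sqrt_nonneg 2))]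
end

section
/- For every β with 0 < β ≤ 2, every ε > 0, and all real numbers x, y, the inequality |x − y|^β ≤ (1 + ε)·|x|^β + (1 + 2^β/(4ε))·|y|^β holds. -/
/-- `2^t ≤ 1 + t` for `t ∈ [0,1]`. -/
lemma two_rpow_le_one_add {t : ℝ} (h0 : 0 ≤ t) (h1 : t ≤ 1) :
    (2 : ℝ) ^ t ≤ 1 + t := by
  have := rpow_one_add_le_one_add_mul_self (s := 1) (by norm_num) h0 h1
  norm_num at this
  linarith

/-- `2*γ ≤ 2^γ` for `γ ∈ [0,1]`. -/
lemma two_mul_le_two_rpow {γ : ℝ} (h0 : 0 ≤ γ) (h1 : γ ≤ 1) :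
    2 * γ ≤ (2 : ℝ) ^ γ := by
  have h2 : (2 : ℝ) ^ (1 - γ) ≤ 2 - γ := by
    have := two_rpow_le_one_add (t := 1 - γ) (by linarith) (by linarith)
    linarith
  have hpos : (0 : ℝ) < 2 ^ (1 - γ) := Real.rpow_pos_of_pos (by norm_num) _
  have key : (2 : ℝ) ^ γ * (2 : ℝ) ^ (1 - γ) = 2 := by
    rw [← Real.rpow_add (by norm_num)]; norm_num
  have h5 : 2 * γ * (2 : ℝ) ^ (1 - γ) ≤ (2 : ℝ) ^ γ * (2 : ℝ) ^ (1 - γ) := by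
    rw [key]
    nlinarith [sq_nonneg (1 - γ),
      mul_le_mul_of_nonneg_left h2 (by linarith : (0 : ℝ) ≤ 2 * γ)]
  exact le_of_mul_le_mul_right h5 hpos

/-- Subadditivity of `rpow` with exponent in `[0,1]` on nonneg reals. -/
lemma rpow_add_le_add_rpow' {a b p : ℝ} (ha : 0 ≤ a) (hb : 0 ≤ b)
    (hp0 : 0 ≤ p) (hp1 : p ≤ 1) : (a + b) ^ p ≤ a ^ p + b ^ p := by
  have := NNReal.rpow_add_le_add_rpow (a.toNNReal) (b.toNNReal) hp0 hp1
  have h := NNReal.coe_le_coe.2 this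
  push_cast at h
  rwa [Real.coe_toNNReal _ ha, Real.coe_toNNReal _ hb] at h

/-- Weighted Young-type inequality for `1 ≤ β`. -/
lemma add_rpow_le_weighted {a b β ε : ℝ} (ha : 0 ≤ a) (hb : 0 ≤ b)
    (hβ1 : 1 ≤ β) (hε : 0 < ε) :
    (a + b) ^ β ≤ (1 + ε) ^ (β - 1) * a ^ β + (1 + 1 / ε) ^ (β - 1) * b ^ β := by
  have h1ε : (0 : ℝ) < 1 + ε := by linarith
  set w₁ : ℝ := 1 / (1 + ε) with hw₁
  set w₂ : ℝ := ε / (1 + ε) with hw₂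
  have hw₁0 : 0 ≤ w₁ := by rw [hw₁]; positivity
  have hw₂0 : 0 ≤ w₂ := by rw [hw₂]; positivity
  have hwsum : w₁ + w₂ = 1 := by rw [hw₁, hw₂]; field_simp
  set z₁ : ℝ := (1 + ε) * a with hz₁
  set z₂ : ℝ := ((1 + ε) / ε) * b with hz₂
  have hz₁0 : 0 ≤ z₁ := by rw [hz₁]; positivity
  have hz₂0 : 0 ≤ z₂ := by rw [hz₂]; positivity
  have hconv := (convexOn_rpow hβ1).2 (Set.mem_Ici.2 hz₁0) (Set.mem_Ici.2 hz₂0)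
    hw₁0 hw₂0 hwsum
  simp only [smul_eq_mul] at hconv
  have hcomb : w₁ * z₁ + w₂ * z₂ = a + b := by
    rw [hw₁, hw₂, hz₁, hz₂]; field_simp
  rw [hcomb] at hconv
  refine hconv.trans ?_
  have e₁ : w₁ * z₁ ^ β = (1 + ε) ^ (β - 1) * a ^ β := by
    rw [hw₁, hz₁, Real.mul_rpow h1ε.le ha, Real.rpow_sub h1ε, Real.rpow_one]
    ring
  have e₂ : w₂ * z₂ ^ β = (1 + 1 / ε) ^ (β - 1) * b ^ β := by
    have hq : (1 : ℝ) + 1 / ε = (1 + ε) / ε := by field_simp; ring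
    have hqpos : (0 : ℝ) < (1 + ε) / ε := by positivity
    rw [hw₂, hz₂, Real.mul_rpow hqpos.le hb, hq, Real.rpow_sub hqpos, Real.rpow_one]
    field_simp
  rw [e₁, e₂]

/-- For `0 < β ≤ 2`, `ε > 0` and all real `x, y`:
`|x - y|^β ≤ (1 + ε)|x|^β + (1 + 2^β/(4ε))|y|^β`. -/
theorem abs_sub_rpow_young (β : ℝ) (hβ0 : 0 < β) (hβ2 : β ≤ 2) (ε : ℝ) (hε : 0 < ε)
    (x y : ℝ) :
    |x - y| ^ β ≤ (1 + ε) * |x| ^ β + (1 + 2 ^ β / (4 * ε)) * |y| ^ β := by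
  set a := |x| with ha
  set b := |y| with hb
  have ha0 : 0 ≤ a := abs_nonneg x
  have hb0 : 0 ≤ b := abs_nonneg y
  have habs : |x - y| ≤ a + b := abs_sub x y
  have hstep : |x - y| ^ β ≤ (a + b) ^ β :=
    Real.rpow_le_rpow (abs_nonneg _) habs hβ0.le
  have hε4 : (0 : ℝ) < 4 * ε := by linarith
  have h2β : (0 : ℝ) < 2 ^ β := Real.rpow_pos_of_pos (by norm_num) _
  have haβ : (0 : ℝ) ≤ a ^ β := Real.rpow_nonneg ha0 _
  have hbβ : (0 : ℝ) ≤ b ^ β := Real.rpow_nonneg hb0 _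
  rcases le_or_gt β 1 with hβ1 | hβ1
  · -- subadditive case
    have hsub := rpow_add_le_add_rpow' ha0 hb0 hβ0.le hβ1
    have hc1 : (1 : ℝ) ≤ 1 + ε := by linarith
    have hc2 : (1 : ℝ) ≤ 1 + 2 ^ β / (4 * ε) := by
      have : (0 : ℝ) ≤ 2 ^ β / (4 * ε) := by positivity
      linarith
    nlinarith [mul_le_mul_of_nonneg_right hc1 haβ, mul_le_mul_of_nonneg_right hc2 hbβ]
  · -- convexity case
    have hw := add_rpow_le_weighted ha0 hb0 hβ1.le hε
    have hc1 : (1 + ε) ^ (β - 1) ≤ 1 + ε := by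
      calc (1 + ε) ^ (β - 1) ≤ (1 + ε) ^ (1 : ℝ) :=
            Real.rpow_le_rpow_of_exponent_le (by linarith) (by linarith)
        _ = 1 + ε := Real.rpow_one _
    have hc2 : (1 + 1 / ε) ^ (β - 1) ≤ 1 + 2 ^ β / (4 * ε) := by
      have hεinv : (0 : ℝ) ≤ 1 / ε := by positivity
      have hbern : (1 + 1 / ε) ^ (β - 1) ≤ 1 + (β - 1) * (1 / ε) :=
        rpow_one_add_le_one_add_mul_self (by linarith) (by linarith) (by linarith)
      have hkey : β - 1 ≤ 2 ^ β / 4 := by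
        have h2γ := two_mul_le_two_rpow (γ := β - 1) (by linarith) (by linarith)
        have hsplit : (2 : ℝ) ^ (β - 1) = 2 ^ β / 2 := by
          rw [Real.rpow_sub (by norm_num), Real.rpow_one]
        rw [hsplit] at h2γ
        linarith
      have h2 : (β - 1) * (1 / ε) ≤ 2 ^ β / (4 * ε) := by
        rw [mul_one_div, show (2 : ℝ) ^ β / (4 * ε) = (2 ^ β / 4) / ε by ring]
        gcongr
      linarith
    calc |x - y| ^ β ≤ (a + b) ^ β := hstep
      _ ≤ (1 + ε) ^ (β - 1) * a ^ β + (1 + 1 / ε) ^ (β - 1) * b ^ β := hw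
      _ ≤ (1 + ε) * a ^ β + (1 + 2 ^ β / (4 * ε)) * b ^ β := by gcongr
      _ = (1 + ε) * |x| ^ β + (1 + 2 ^ β / (4 * ε)) * |y| ^ β := rfl
end
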